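/- Let q be a prime power, let ℓ be a divisor of q−1, let f be an r-th order cyclotomic mapping of index ℓ on F_q with coefficients a_0, …, a_{ℓ−1} ∈ F_q^* which is a permutation of F_q, and let α, β, γ, δ ∈ F_q with α = 0 and β, γ, δ all nonzero. Then the number N of c ∈ F_q^* with γc + δ ≠ 0 and f(c) = β/(γc + δ) satisfies N < max{ 2ℓ, (2q)^{1/2} }. -/

import Mathlib

open Polynomial Finset

/-- The Carlitz composition `P_n` over a field with `q` elements, built from
the constants `c 0, c 1, …, c (n+1)`:
`P_n(x) = (⋯((c_0 x + c_1)^{q-2} + c_2)^{q-2} ⋯ + c_n)^{q-2} + c_{n+1}`. -/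
def carlitzAux {F : Type*} [Field F] (q : ℕ) (c : ℕ → F) : ℕ → F → F
  | 0 => fun x => c 0 * x + c 1
  | n + 1 => fun x => (carlitzAux q c n x) ^ (q - 2) + c (n + 2)

/-- `f` agrees (as a map) with a Carlitz composition `P_n` with `n` inversions,
where `c 0 ≠ 0` and `c i ≠ 0` for `2 ≤ i ≤ n`. -/
def IsCarlitzForm {F : Type*} [Field F] [Fintype F] (f : F → F) (n : ℕ) : Prop :=
  ∃ c : ℕ → F, c 0 ≠ 0 ∧ (∀ i, 2 ≤ i → i ≤ n → c i ≠ 0) ∧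
    ∀ x, f x = carlitzAux (Fintype.card F) c n x

/-- The Carlitz rank of a map `f`: the smallest `n` such that `f` agrees with a
Carlitz composition `P_n`. -/
noncomputable def carlitzRank {F : Type*} [Field F] [Fintype F] (f : F → F) : ℕ :=
  sInf {n | IsCarlitzForm f n}

/-- `f` is the `r`-th order cyclotomic mapping of index `ℓ` with respect to the
primitive element `ξ` and coefficients `a 0, …, a (ℓ-1)`: it maps `0` to `0` and
`x` to `a i * x ^ r` for `x` in the cyclotomic coset `C_i = ξ^i C_0`, where
`C_0` is the set of nonzero `ℓ`-th powers. -/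
def IsCycMap {F : Type*} [Field F] (ℓ r : ℕ) (ξ : F) (a : ℕ → F) (f : F → F) : Prop :=
  f 0 = 0 ∧ (∀ i < ℓ, a i ≠ 0) ∧
    ∀ i < ℓ, ∀ y : F, y ≠ 0 → f (ξ ^ i * y ^ ℓ) = a i * (ξ ^ i * y ^ ℓ) ^ r

/-- The index `Ind(f)` of a map `f` with `f 0 = 0`: the smallest divisor `ℓ` of
`q - 1` such that `f` is an `r`-th order cyclotomic mapping of index `ℓ` for some
positive `r`, some primitive element `ξ` and some nonzero coefficients. -/
noncomputable def cycIndex {F : Type*} [Field F] [Fintype F] (f : F → F) : ℕ :=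
  sInf {ℓ | ℓ ∣ Fintype.card F - 1 ∧ ∃ r, 1 ≤ r ∧ ∃ ξ : F,
    orderOf ξ = Fintype.card F - 1 ∧ ∃ a : ℕ → F, IsCycMap ℓ r ξ a f}

/-- The linearity `L(f) = max_{a ≠ 0} |{c : f c = a c}|`. -/
def linearity {F : Type*} [Field F] [Fintype F] [DecidableEq F] (f : F → F) : ℕ :=
  (Finset.univ.erase (0 : F)).sup
    (fun a => (Finset.univ.filter (fun c => f c = a * c)).card)

/-- The invertibility `I(f) = max_{c ≠ 0} |{x ≠ 0 : f x = c / x}|`. -/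
def invertibility {F : Type*} [Field F] [Fintype F] [DecidableEq F] (f : F → F) : ℕ :=
  (Finset.univ.erase (0 : F)).sup
    (fun c => ((Finset.univ.erase (0 : F)).filter (fun x => f x = c / x)).card)

/-- If `f` is an `r`-th order cyclotomic mapping of index `ℓ ∣ q−1`
which permutes `F_q`, and `α = 0` while `β, γ, δ` are all nonzero, then the number `N`
of `c ∈ F_q^*` with `γc+δ ≠ 0` and `f(c) = β/(γc+δ)` satisfies `N < max{2ℓ, (2q)^{1/2}}`. -/
theorem stmt8 {F : Type*} [Field F] [Fintype F] [DecidableEq F]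
    (ℓ r : ℕ) (hl : ℓ ∣ Fintype.card F - 1) (hr : 1 ≤ r)
    (ξ : F) (hξ : orderOf ξ = Fintype.card F - 1) (a : ℕ → F) (f : F → F)
    (hcyc : IsCycMap ℓ r ξ a f) (hperm : Function.Bijective f)
    (β γ δ : F) (hβ : β ≠ 0) (hγ : γ ≠ 0) (hδ : δ ≠ 0) :
    ((((Finset.univ.erase (0 : F)).filter
      (fun c => γ * c + δ ≠ 0 ∧ f c = β / (γ * c + δ))).card) : ℝ)
      < max (2 * (ℓ : ℝ)) (Real.sqrt (2 * (Fintype.card F : ℝ))) := by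
  
  classical
  have hq2 : 1 < Fintype.card F := Fintype.one_lt_card
  set q := Fintype.card F with hqdef
  have hq1 : 0 < q - 1 := by omega
  have hℓpos : 0 < ℓ := by
    rcases Nat.eq_zero_or_pos ℓ with h | h
    · exfalso; rw [h, zero_dvd_iff] at hl; omega
    · exact h
  have hξ0 : ξ ≠ 0 := by
    intro h
    have h1 : ξ ^ (q - 1) = 1 := by rw [← hξ]; exact pow_orderOf_eq_one ξ
    rw [h, zero_pow (by omega)] at h1
    exact zero_ne_one h1
  set ξᵤ : Fˣ := Units.mk0 ξ hξ0 with hξᵤ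
  have hordu : orderOf ξᵤ = q - 1 := by
    rw [← orderOf_units, hξᵤ, Units.val_mk0, hξ]
  have hsurj : ∀ c : F, c ≠ 0 → ∃ k : ℕ, ξ ^ k = c := by
    intro c hc
    have htop : Subgroup.zpowers ξᵤ = ⊤ := by
      apply Subgroup.eq_top_of_card_eq
      rw [Nat.card_zpowers, hordu, Nat.card_eq_fintype_card, Fintype.card_units]
    have hfin : IsOfFinOrder ξᵤ := orderOf_pos_iff.mp (by omega)
    have hmem : Units.mk0 c hc ∈ Submonoid.powers ξᵤ :=
      hfin.mem_powers_iff_mem_zpowers.mpr (by rw [htop]; exact Subgroup.mem_top _)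
    obtain ⟨k, hk⟩ := hmem
    exact ⟨k, by simpa [Units.val_pow_eq_pow_val, hξᵤ] using congrArg Units.val hk⟩
  obtain ⟨e, he⟩ : ∃ e : F → ℕ, ∀ c : F, c ≠ 0 → ξ ^ (e c) = c := by
    refine ⟨fun c => if h : ∃ k : ℕ, ξ ^ k = c then h.choose else 0, fun c hc => ?_⟩
    have h := hsurj c hc
    simp only [dif_pos h]
    exact h.choose_spec
  set S : Finset F := (Finset.univ.erase (0 : F)).filter
      (fun c => γ * c + δ ≠ 0 ∧ f c = β / (γ * c + δ)) with hSdef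
  have hmemS : ∀ c ∈ S, c ≠ 0 ∧ (γ * c + δ ≠ 0 ∧ f c = β / (γ * c + δ)) := by
    intro c hc
    rw [hSdef, Finset.mem_filter, Finset.mem_erase] at hc
    exact ⟨hc.1.1, hc.2⟩
  have hfc : ∀ c ∈ S, f c = a (e c % ℓ) * c ^ r := by
    intro c hc
    obtain ⟨hc0, -, -⟩ := hmemS c hc
    have hrep : ξ ^ (e c % ℓ) * (ξ ^ (e c / ℓ)) ^ ℓ = c := by
      rw [← pow_mul, ← pow_add, Nat.mod_add_div', he c hc0]
    have hy : ξ ^ (e c / ℓ) ≠ 0 := pow_ne_zero _ hξ0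
    have h := hcyc.2.2 (e c % ℓ) (Nat.mod_lt _ hℓpos) (ξ ^ (e c / ℓ)) hy
    rw [hrep] at h
    exact h
  have hkey : ∀ c ∈ S, a (e c % ℓ) * c ^ r * (γ * c + δ) = β := by
    intro c hc
    obtain ⟨hc0, hg, hfcd⟩ := hmemS c hc
    have h := (hfc c hc).symm.trans hfcd
    rwa [eq_div_iff hg] at h
  -- pair lemma
  have hpair : ∀ c₁ ∈ S, ∀ c₂ ∈ S, e c₁ % ℓ = e c₂ % ℓ → c₁ ≠ c₂ →
      (c₁ * c₂⁻¹) ^ (r + 1) - 1 ≠ 0 ∧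
      c₂ * (γ * ((c₁ * c₂⁻¹) ^ (r + 1) - 1)) = δ * (1 - (c₁ * c₂⁻¹) ^ r) := by
    intro c₁ h₁ c₂ h₂ hcls hne
    obtain ⟨hc₁0, hg₁, -⟩ := hmemS c₁ h₁
    obtain ⟨hc₂0, hg₂, -⟩ := hmemS c₂ h₂
    set u := c₁ * c₂⁻¹ with hu
    have hc₁eq : c₁ = u * c₂ := by rw [hu, mul_assoc, inv_mul_cancel₀ hc₂0, mul_one]
    have hu1 : u ≠ 1 := by intro h; apply hne; rw [hc₁eq, h, one_mul]
    have ha : a (e c₂ % ℓ) ≠ 0 := hcyc.2.1 _ (Nat.mod_lt _ hℓpos)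
    have hE : c₁ ^ r * (γ * c₁ + δ) = c₂ ^ r * (γ * c₂ + δ) := by
      have e₁ := hkey c₁ h₁
      have e₂ := hkey c₂ h₂
      rw [hcls] at e₁
      have h3 : a (e c₂ % ℓ) * (c₁ ^ r * (γ * c₁ + δ)) =
          a (e c₂ % ℓ) * (c₂ ^ r * (γ * c₂ + δ)) := by linear_combination e₁ - e₂
      exact mul_left_cancel₀ ha h3
    rw [hc₁eq, mul_pow] at hE
    have hH : u ^ r * (γ * (u * c₂) + δ) = γ * c₂ + δ := by
      have hcr : c₂ ^ r ≠ 0 := pow_ne_zero _ hc₂0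
      have h4 : c₂ ^ r * (u ^ r * (γ * (u * c₂) + δ)) = c₂ ^ r * (γ * c₂ + δ) := by
        linear_combination hE
      exact mul_left_cancel₀ hcr h4
    constructor
    · intro h1
      have h1' : u ^ (r + 1) = 1 := by rwa [sub_eq_zero] at h1
      have hd : δ * u ^ r = δ := by linear_combination hH - γ * c₂ * h1'
      have hur : u ^ r = 1 := by
        have := mul_left_cancel₀ hδ (hd.trans (mul_one δ).symm); exact this
      apply hu1
      calc u = u ^ r * u := by rw [hur, one_mul]
        _ = u ^ (r + 1) := (pow_succ u r).symm
        _ = 1 := h1'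
    · linear_combination hH
  -- the cyclic subgroup of ℓ-th powers
  set dd := (q - 1) / ℓ with hdd
  have hldd : ℓ * dd = q - 1 := Nat.mul_div_cancel' hl
  have hddpos : 0 < dd := by
    rcases Nat.eq_zero_or_pos dd with h | h
    · exfalso; rw [h, Nat.mul_zero] at hldd; omega
    · exact h
  set η : F := ξ ^ ℓ with hη
  have hη0 : η ≠ 0 := pow_ne_zero _ hξ0
  have hordη : orderOf η = dd := by
    have h1 : Units.mk0 η hη0 = ξᵤ ^ ℓ := by
      ext; simp [hη, hξᵤ]
    have h2 : orderOf η = orderOf (ξᵤ ^ ℓ) := by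
      rw [← h1, ← orderOf_units, Units.val_mk0]
    rw [h2, orderOf_pow, hordu, Nat.gcd_eq_right hl]
  have hηdd : η ^ dd = 1 := by rw [← hordη]; exact pow_orderOf_eq_one η
  set Z : Finset F := (Finset.range dd).image (fun m => η ^ m) with hZ
  have hZcard : Z.card ≤ dd := le_trans Finset.card_image_le (by simp)
  have hpowZ : ∀ m : ℕ, η ^ m ∈ Z := by
    intro m
    refine Finset.mem_image.2 ⟨m % dd, Finset.mem_range.2 (Nat.mod_lt _ hddpos), ?_⟩
    conv_lhs => rw [show m % dd = m % orderOf η by rw [hordη]]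
    exact pow_mod_orderOf η m
  have hratio : ∀ k₁ k₂ : ℕ, k₂ ≤ k₁ → k₁ % ℓ = k₂ % ℓ →
      ∃ m : ℕ, η ^ m = ξ ^ k₁ * (ξ ^ k₂)⁻¹ := by
    intro k₁ k₂ hle hmod
    have hdvd : ℓ ∣ k₁ - k₂ := (Nat.modEq_iff_dvd' hle).mp hmod.symm
    refine ⟨(k₁ - k₂) / ℓ, ?_⟩
    rw [hη, ← pow_mul, Nat.mul_div_cancel' hdvd, pow_sub₀ ξ hξ0 hle]
  have hUmem : ∀ c₁ ∈ S, ∀ c₂ ∈ S, e c₁ % ℓ = e c₂ % ℓ → c₁ * c₂⁻¹ ∈ Z := by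
    intro c₁ h₁ c₂ h₂ hcls
    obtain ⟨hc₁0, -, -⟩ := hmemS c₁ h₁
    obtain ⟨hc₂0, -, -⟩ := hmemS c₂ h₂
    rcases le_total (e c₂) (e c₁) with hle | hle
    · obtain ⟨m, hm⟩ := hratio _ _ hle hcls
      rw [he c₁ hc₁0, he c₂ hc₂0] at hm
      exact hm ▸ hpowZ m
    · obtain ⟨m, hm⟩ := hratio _ _ hle hcls.symm
      rw [he c₂ hc₂0, he c₁ hc₁0] at hm
      have h1 : η ^ m * η ^ (m * (dd - 1)) = 1 := by
        rw [← pow_add, show m + m * (dd - 1) = dd * m by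
          obtain ⟨k, hk⟩ : ∃ k, dd = k + 1 := ⟨dd - 1, by omega⟩
          rw [hk, Nat.add_sub_cancel, Nat.succ_mul]; ring,
          pow_mul, hηdd, one_pow]
      have h2 : c₁ * c₂⁻¹ = η ^ (m * (dd - 1)) := by
        rw [← inv_eq_of_mul_eq_one_right h1, hm, mul_inv_rev, inv_inv]
      rw [h2]; exact hpowZ _
  -- counting
  set T : ℕ → Finset F := fun i => S.filter (fun c => e c % ℓ = i) with hT
  set D : Finset (F × F) := (Finset.range ℓ).biUnion (fun i => (T i).offDiag) with hD
  have hdisj : ∀ i ∈ Finset.range ℓ, ∀ j ∈ Finset.range ℓ, i ≠ j →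
      Disjoint ((T i).offDiag) ((T j).offDiag) := by
    intro i _ j _ hij
    rw [Finset.disjoint_left]
    intro p hp hq'
    rw [Finset.mem_offDiag] at hp hq'
    have h1 := (Finset.mem_filter.1 hp.1).2
    have h2 := (Finset.mem_filter.1 hq'.1).2
    exact hij (h1 ▸ h2 ▸ rfl)
  have hmemD : ∀ p ∈ D, p.1 ∈ S ∧ p.2 ∈ S ∧ e p.1 % ℓ = e p.2 % ℓ ∧ p.1 ≠ p.2 := by
    intro p hp
    rw [hD, Finset.mem_biUnion] at hp
    obtain ⟨i, -, hp⟩ := hp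
    rw [Finset.mem_offDiag] at hp
    obtain ⟨hp1, hp2, hp3⟩ := hp
    have h1 := Finset.mem_filter.1 hp1
    have h2 := Finset.mem_filter.1 hp2
    exact ⟨h1.1, h2.1, h1.2.trans h2.2.symm, hp3⟩
  have hDZ : D.card ≤ Z.card := by
    apply Finset.card_le_card_of_injOn (fun p => p.1 * p.2⁻¹)
    · intro p hp
      obtain ⟨h1, h2, h3, -⟩ := hmemD p hp
      exact hUmem _ h1 _ h2 h3
    · intro p hp p' hp' huu
      simp only [Finset.mem_coe] at hp hp'
      obtain ⟨hp1, hp2, hp3, hp4⟩ := hmemD p hp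
      obtain ⟨hp1', hp2', hp3', hp4'⟩ := hmemD p' hp'
      obtain ⟨hq1, hq2⟩ := hpair _ hp1 _ hp2 hp3 hp4
      obtain ⟨hq1', hq2'⟩ := hpair _ hp1' _ hp2' hp3' hp4'
      have hc₂0 : p.2 ≠ 0 := (hmemS _ hp2).1
      have hc₂0' : p'.2 ≠ 0 := (hmemS _ hp2').1
      simp only at huu
      rw [huu] at hq1 hq2
      have h2eq : p.2 = p'.2 :=
        mul_right_cancel₀ (mul_ne_zero hγ hq1) (hq2.trans hq2'.symm)
      have h1eq : p.1 = p'.1 := by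
        have e1 : p.1 = p.1 * p.2⁻¹ * p.2 := by field_simp
        have e2 : p'.1 = p'.1 * p'.2⁻¹ * p'.2 := by field_simp
        rw [e1, e2, huu, h2eq]
      exact Prod.ext h1eq h2eq
  have hDsum : D.card = ∑ i ∈ Finset.range ℓ, ((T i).card * (T i).card - (T i).card) := by
    rw [hD, Finset.card_biUnion hdisj]
    exact Finset.sum_congr rfl (fun i _ => Finset.offDiag_card _)
  have hNsum : S.card = ∑ i ∈ Finset.range ℓ, (T i).card := by
    apply Finset.card_eq_sum_card_fiberwise
    intro c _
    exact Finset.mem_range.2 (Nat.mod_lt _ hℓpos)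
  have hle_sq : ∀ m : ℕ, m ≤ m * m := by
    intro m
    cases m with
    | zero => simp
    | succ k => exact Nat.le_mul_of_pos_left _ (Nat.succ_pos k)
  have hsum2 : ∑ i ∈ Finset.range ℓ, (T i).card ^ 2 = D.card + S.card := by
    rw [hDsum, hNsum, ← Finset.sum_add_distrib]
    apply Finset.sum_congr rfl
    intro i _
    rw [sq, Nat.sub_add_cancel (hle_sq _)]
  have hCS : S.card ^ 2 ≤ ℓ * (D.card + S.card) := by
    calc S.card ^ 2 = (∑ i ∈ Finset.range ℓ, (T i).card) ^ 2 := by rw [hNsum]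
      _ ≤ (Finset.range ℓ).card * ∑ i ∈ Finset.range ℓ, (T i).card ^ 2 :=
          sq_sum_le_card_mul_sum_sq
      _ = ℓ * (D.card + S.card) := by rw [Finset.card_range, hsum2]
  have hmain : S.card ^ 2 ≤ ℓ * S.card + (q - 1) := by
    calc S.card ^ 2 ≤ ℓ * (D.card + S.card) := hCS
      _ ≤ ℓ * (dd + S.card) := by
          apply Nat.mul_le_mul_left
          exact Nat.add_le_add_right (hDZ.trans hZcard) _
      _ = ℓ * S.card + (q - 1) := by rw [Nat.mul_add, hldd]; ring
  -- conclusion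
  rcases lt_or_ge (S.card : ℝ) (2 * (ℓ : ℝ)) with h | h
  · exact lt_max_of_lt_left h
  · apply lt_max_of_lt_right
    have h2ℓ : 2 * ℓ ≤ S.card := by exact_mod_cast h
    have h1 : 2 * ℓ * S.card ≤ S.card * S.card :=
      Nat.mul_le_mul_right _ h2ℓ
    have hN : S.card ^ 2 < 2 * q := by
      rw [sq] at hmain ⊢
      have h2 : 2 * (ℓ * S.card) ≤ S.card * S.card := by
        rw [← mul_assoc]; exact h1
      omega
    rw [Real.lt_sqrt (by positivity)]
    exact_mod_cast hN
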